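/- Fix a capacity r ≥ 0 and suppose the premium fees π = (π_k^t) satisfy the IR condition. Then for every user i of type k (i.e., with V_i^t = V_k^t for all t) and demands D_i^t > 0, the contract is individually rational: CU_i(k) ≤ CU_i(0). Moreover CU_i(k) = Σ_t (π_k^t + p)·D_i^t, i.e., when a user chooses his own type of contract his cost consists only of the premium fee and the electricity bill under his original demand. -/

import Mathlib

open MeasureTheory Finset

noncomputable section

variable {Ω : Type*} [MeasurableSpace Ω] {T : Type*} [Fintype T] {n : ℕ}

/-- Supply at time `t` under capacity `r`: `s^t(r,Θ^t) = min(D_a^t, r·Θ^t)`. -/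
def supplyF (Da : T → ℝ) (Θ : T → Ω → ℝ) (r : ℝ) (t : T) (ω : Ω) : ℝ :=
  min (Da t) (r * Θ t ω)

/-- Energy allocated to a user with demand profile `Di`:
`d_i^t(r,Θ^t) = (D_i^t/D_a^t)·s^t(r,Θ^t)`. -/
def allocF (Da : T → ℝ) (Θ : T → Ω → ℝ) (Di : T → ℝ) (r : ℝ) (t : T) (ω : Ω) : ℝ :=
  Di t / Da t * supplyF Da Θ r t ω

/-- Expected lost fraction `E[1 - s^t(r,Θ^t)/D_a^t]`. -/
def lostFrac (μ : Measure Ω) (Da : T → ℝ) (Θ : T → Ω → ℝ) (r : ℝ) (t : T) : ℝ :=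
  ∫ ω, (1 - supplyF Da Θ r t ω / Da t) ∂μ

/-- Cost `CU_i(m)` of a user with demand `Di` and values of lost load `Vi`
who chooses contract item `m`. -/
def CUins (μ : Measure Ω) (Da : T → ℝ) (Θ : T → Ω → ℝ) (p r : ℝ)
    (π V : Fin (n + 1) → T → ℝ) (Di Vi : T → ℝ) (m : Fin (n + 1)) : ℝ :=
  (∑ t, π m t * Di t) + (∑ t, p * ∫ ω, allocF Da Θ Di r t ω ∂μ)
    + (∑ t, ∫ ω, Vi t * (Di t - allocF Da Θ Di r t ω) ∂μ)
    - ∑ t, ∫ ω, (V m t - p) * (Di t - allocF Da Θ Di r t ω) ∂μ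

/-- Cost `CU_i(0)` of a user with demand `Di` and values of lost load `Vi`
who buys no insurance. -/
def CUnoins (μ : Measure Ω) (Da : T → ℝ) (Θ : T → Ω → ℝ) (p r : ℝ)
    (Di Vi : T → ℝ) : ℝ :=
  (∑ t, p * ∫ ω, allocF Da Θ Di r t ω ∂μ)
    + ∑ t, ∫ ω, Vi t * (Di t - allocF Da Θ Di r t ω) ∂μ

/-- IC condition: `π_k^t − π_m^t = (V_k^t − V_m^t)·E[1 − s^t/D_a^t]` for all `t, k, m`. -/
def ICcond (μ : Measure Ω) (Da : T → ℝ) (Θ : T → Ω → ℝ) (r : ℝ)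
    (π V : Fin (n + 1) → T → ℝ) : Prop :=
  ∀ t k m, π k t - π m t = (V k t - V m t) * lostFrac μ Da Θ r t

/-- IR condition: `0 ≤ π_k^t ≤ (V_k^t − p)·E[1 − s^t/D_a^t]` for all `t, k`. -/
def IRcond (μ : Measure Ω) (Da : T → ℝ) (Θ : T → Ω → ℝ) (p r : ℝ)
    (π V : Fin (n + 1) → T → ℝ) : Prop :=
  ∀ t k, 0 ≤ π k t ∧ π k t ≤ (V k t - p) * lostFrac μ Da Θ r t

/-- Total reimbursement `C_s^t(r,Θ^t) = Σ_k (V_k^t − p)(D_k^t − d_k^t)`. -/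
def CsF (Da : T → ℝ) (Θ : T → Ω → ℝ) (D V : Fin (n + 1) → T → ℝ) (p r : ℝ)
    (t : T) (ω : Ω) : ℝ :=
  ∑ k, (V k t - p) * (D k t - allocF Da Θ (D k) r t ω)

/-- The utility's profit `f^Ins(r,π)` under the insurance contract. -/
def fIns (μ : Measure Ω) (Da : T → ℝ) (Θ : T → Ω → ℝ) (D V : Fin (n + 1) → T → ℝ)
    (p c : ℝ) (r : ℝ) (π : Fin (n + 1) → T → ℝ) : ℝ :=
  (∑ k, ∑ t, π k t * D k t) + (∑ t, p * ∫ ω, supplyF Da Θ r t ω ∂μ) - c * r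
    - ∑ t, ∫ ω, CsF Da Θ D V p r t ω ∂μ

/-- The utility's profit `f^No(r)` without insurance. -/
def fNo (μ : Measure Ω) (Da : T → ℝ) (Θ : T → Ω → ℝ) (p c : ℝ) (r : ℝ) : ℝ :=
  (∑ t, p * ∫ ω, supplyF Da Θ r t ω ∂μ) - c * r

/-- The social cost `C^SO(r) = c_r·r + Σ_t E[C_s^t(r,Θ^t)]`. -/
def CSO (μ : Measure Ω) (Da : T → ℝ) (Θ : T → Ω → ℝ) (D V : Fin (n + 1) → T → ℝ)
    (p c : ℝ) (r : ℝ) : ℝ :=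
  c * r + ∑ t, ∫ ω, CsF Da Θ D V p r t ω ∂μ

/-- `g(r) := −Σ_t p·E[s^t] + c_r·r + Σ_t E[C_s^t] + ξ`. -/
def gReg (μ : Measure Ω) (Da : T → ℝ) (Θ : T → Ω → ℝ) (D V : Fin (n + 1) → T → ℝ)
    (p c ξ : ℝ) (r : ℝ) : ℝ :=
  -(∑ t, p * ∫ ω, supplyF Da Θ r t ω ∂μ) + c * r
    + (∑ t, ∫ ω, CsF Da Θ D V p r t ω ∂μ) + ξ

/-- `f^l(r) = Σ_t Σ_k D_k^t·(V_k^t − V_1^t)·E[1 − s^t/D_a^t]`. -/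
def fL (μ : Measure Ω) (Da : T → ℝ) (Θ : T → Ω → ℝ) (D V : Fin (n + 1) → T → ℝ)
    (r : ℝ) : ℝ :=
  ∑ t, ∑ k, D k t * (V k t - V 0 t) * lostFrac μ Da Θ r t

/-- `f^u(r) = Σ_t Σ_k D_k^t·(V_k^t − p)·E[1 − s^t/D_a^t]`. -/
def fU (μ : Measure Ω) (Da : T → ℝ) (Θ : T → Ω → ℝ) (D V : Fin (n + 1) → T → ℝ)
    (p : ℝ) (r : ℝ) : ℝ :=
  ∑ t, ∑ k, D k t * (V k t - p) * lostFrac μ Da Θ r t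

/-- Feasibility for Problem-Ins: `r ≥ 0`, regulated profit `f^Ins(r,π) ≥ ξ`, IC and IR. -/
def InsFeasible (μ : Measure Ω) (Da : T → ℝ) (Θ : T → Ω → ℝ)
    (D V : Fin (n + 1) → T → ℝ) (p c ξ : ℝ) (r : ℝ) (π : Fin (n + 1) → T → ℝ) : Prop :=
  0 ≤ r ∧ ξ ≤ fIns μ Da Θ D V p c r π ∧ ICcond μ Da Θ r π V ∧ IRcond μ Da Θ p r π V

/-- Optimality for Problem-Ins: feasible and minimizing the total premium
`Σ_k Σ_t π_k^t D_k^t` among all feasible points. -/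
def InsOptimal (μ : Measure Ω) (Da : T → ℝ) (Θ : T → Ω → ℝ)
    (D V : Fin (n + 1) → T → ℝ) (p c ξ : ℝ) (r : ℝ) (π : Fin (n + 1) → T → ℝ) : Prop :=
  InsFeasible μ Da Θ D V p c ξ r π ∧
    ∀ r' π', InsFeasible μ Da Θ D V p c ξ r' π' →
      (∑ k, ∑ t, π k t * D k t) ≤ ∑ k, ∑ t, π' k t * D k t


lemma supply_integrable (μ : Measure Ω) [IsProbabilityMeasure μ] (Da : T → ℝ)
    (Θ : T → Ω → ℝ) (hΘmeas : ∀ t, Measurable (Θ t))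
    (hΘ01 : ∀ t ω, 0 ≤ Θ t ω ∧ Θ t ω ≤ 1) (r : ℝ) (hr : 0 ≤ r) (t : T) :
    Integrable (supplyF Da Θ r t) μ := by
  have hm : Measurable (supplyF Da Θ r t) :=
    measurable_const.min (measurable_const.mul (hΘmeas t))
  refine ⟨hm.aestronglyMeasurable, ?_⟩
  apply HasFiniteIntegral.of_bounded (C := |Da t| + r)
  filter_upwards with ω
  have h1 := (hΘ01 t ω).1
  have h0 : 0 ≤ r * Θ t ω := mul_nonneg hr h1
  simp only [supplyF, Real.norm_eq_abs]
  rw [abs_le]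
  constructor
  · refine le_min ?_ ?_ <;> nlinarith [neg_abs_le (Da t), abs_nonneg (Da t)]
  · exact (min_le_left _ _).trans ((le_abs_self _).trans (by linarith))

lemma key_integral (μ : Measure Ω) [IsProbabilityMeasure μ] (Da : T → ℝ)
    (Θ : T → Ω → ℝ) (hΘmeas : ∀ t, Measurable (Θ t))
    (hΘ01 : ∀ t ω, 0 ≤ Θ t ω ∧ Θ t ω ≤ 1) (Di : T → ℝ) (r : ℝ) (hr : 0 ≤ r)
    (c : ℝ) (t : T) :
    ∫ ω, c * (Di t - allocF Da Θ Di r t ω) ∂μ = c * Di t * lostFrac μ Da Θ r t := by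
  have Is := supply_integrable μ Da Θ hΘmeas hΘ01 r hr t
  have h1 : ∀ ω, c * (Di t - allocF Da Θ Di r t ω)
      = c * Di t - (c * (Di t / Da t)) * supplyF Da Θ r t ω := by
    intro ω; simp only [allocF]; ring
  have h2 : ∀ ω, (1 : ℝ) - supplyF Da Θ r t ω / Da t
      = 1 - (Da t)⁻¹ * supplyF Da Θ r t ω := by intro ω; ring
  simp only [h1]
  rw [integral_sub (integrable_const _) (Is.const_mul _), integral_const,
    integral_const_mul]
  unfold lostFrac
  simp only [h2]
  rw [integral_sub (integrable_const _) (Is.const_mul _), integral_const,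
    integral_const_mul]
  simp only [probReal_univ, ENNReal.toReal_one, smul_eq_mul, one_mul]
  ring

lemma alloc_integral (μ : Measure Ω) [IsProbabilityMeasure μ] (Da : T → ℝ)
    (Θ : T → Ω → ℝ) (hΘmeas : ∀ t, Measurable (Θ t))
    (hΘ01 : ∀ t ω, 0 ≤ Θ t ω ∧ Θ t ω ≤ 1) (Di : T → ℝ) (r : ℝ) (hr : 0 ≤ r)
    (t : T) :
    ∫ ω, allocF Da Θ Di r t ω ∂μ = Di t * (1 - lostFrac μ Da Θ r t) := by
  have Is := supply_integrable μ Da Θ hΘmeas hΘ01 r hr t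
  have h := key_integral μ Da Θ hΘmeas hΘ01 Di r hr 1 t
  simp only [one_mul] at h
  have he : ∀ ω, Di t - allocF Da Θ Di r t ω
      = Di t - (Di t / Da t) * supplyF Da Θ r t ω := by
    intro ω; simp only [allocF]
  simp only [he] at h
  rw [integral_sub (integrable_const _) (Is.const_mul _), integral_const,
    probReal_univ] at h
  have halloc : ∫ ω, allocF Da Θ Di r t ω ∂μ
      = (Di t / Da t) * ∫ ω, supplyF Da Θ r t ω ∂μ := by
    unfold allocF; rw [integral_const_mul]
  simp only [ENNReal.toReal_one, smul_eq_mul, one_mul] at h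
  rw [integral_const_mul] at h
  rw [halloc]
  linarith

/-- under the IR condition, a user of type `k` prefers the type-`k`
contract item over no insurance, and his cost is just premium plus electricity bill. -/
theorem stmt1
    (μ : Measure Ω) [IsProbabilityMeasure μ] [Nonempty T]
    (Θ : T → Ω → ℝ) (hΘmeas : ∀ t, Measurable (Θ t))
    (hΘ01 : ∀ t ω, 0 ≤ Θ t ω ∧ Θ t ω ≤ 1)
    (D V : Fin (n + 1) → T → ℝ) (hD : ∀ k t, 0 < D k t)
    (hVmono : ∀ t, Monotone fun k => V k t)
    (Da : T → ℝ) (hDa : ∀ t, Da t = ∑ k, D k t)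
    (p : ℝ) (hp0 : 0 ≤ p) (hpV : ∀ t, p ≤ V 0 t)
    (r : ℝ) (hr : 0 ≤ r) (π : Fin (n + 1) → T → ℝ)
    (hIR : IRcond μ Da Θ p r π V)
    (k : Fin (n + 1)) (Di Vi : T → ℝ) (hDi : ∀ t, 0 < Di t)
    (hVi : ∀ t, Vi t = V k t) :
    CUins μ Da Θ p r π V Di Vi k ≤ CUnoins μ Da Θ p r Di Vi ∧
      CUins μ Da Θ p r π V Di Vi k = ∑ t, (π k t + p) * Di t := by
  have key : ∀ (c : ℝ) (t : T), ∫ ω, c * (Di t - allocF Da Θ Di r t ω) ∂μ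
      = c * Di t * lostFrac μ Da Θ r t :=
    fun c t => key_integral μ Da Θ hΘmeas hΘ01 Di r hr c t
  have hA : ∀ t, ∫ ω, allocF Da Θ Di r t ω ∂μ
      = Di t * (1 - lostFrac μ Da Θ r t) :=
    fun t => alloc_integral μ Da Θ hΘmeas hΘ01 Di r hr t
  set L := lostFrac μ Da Θ r with hL
  have hViV : ∀ t, ∫ ω, Vi t * (Di t - allocF Da Θ Di r t ω) ∂μ
      = V k t * Di t * L t := by
    intro t; rw [hVi t]; exact key (V k t) t
  have hVp : ∀ t, ∫ ω, (V k t - p) * (Di t - allocF Da Θ Di r t ω) ∂μ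
      = (V k t - p) * Di t * L t := fun t => key (V k t - p) t
  constructor
  · unfold CUins CUnoins
    have hle : (∑ t, π k t * Di t) ≤ ∑ t, (V k t - p) * Di t * L t := by
      refine Finset.sum_le_sum fun t _ => ?_
      have h := (hIR t k).2
      calc π k t * Di t ≤ ((V k t - p) * L t) * Di t :=
            mul_le_mul_of_nonneg_right h (hDi t).le
        _ = (V k t - p) * Di t * L t := by ring
    simp only [hVp]
    linarith
  · unfold CUins
    simp only [hViV, hVp, hA]
    rw [← Finset.sum_add_distrib, ← Finset.sum_add_distrib, ← Finset.sum_sub_distrib]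
    exact Finset.sum_congr rfl fun t _ => by ring

end
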